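/- arXiv:1605.01810 — 2 statements merged into one kernel-verified Lean document; each statement's English description precedes it below -/
import Mathlib

section
/- Let M, N be monoids, f : Σ* → M ⋄ N a monoid homomorphism from the free monoid on an alphabet Σ into the Schützenberger product M ⋄ N = M × P_f(M×N) × N, and write f(u) = (f_M(u), f_{MN}(u), f_N(u)). Then for every word u ∈ Σ*, f_{MN}(u) = ⋃_{u = vaw, a ∈ Σ} (f_M(v)·f_{MN}(a)·f_N(w)), where for X ⊆ M×N, m·X·n = {(my, zn) : (y,z) ∈ X}, and the union ranges over all factorizations of u as v·a·w with a a single letter. -/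
/-- Left action of `m : M` on a finite subset of `M × N`. -/
def actL {M N : Type*} [Monoid M] [Monoid N] [DecidableEq M] [DecidableEq N]
    (m : M) (X : Finset (M × N)) : Finset (M × N) :=
  X.image fun p => (m * p.1, p.2)

/-- Right action of `n : N` on a finite subset of `M × N`. -/
def actR {M N : Type*} [Monoid M] [Monoid N] [DecidableEq M] [DecidableEq N]
    (X : Finset (M × N)) (n : N) : Finset (M × N) :=
  X.image fun p => (p.1, p.2 * n)

/-- Schützenberger product multiplication. -/
def schMul {M N : Type*} [Monoid M] [Monoid N] [DecidableEq M] [DecidableEq N]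
    (p q : M × Finset (M × N) × N) : M × Finset (M × N) × N :=
  (p.1 * q.1, actL p.1 q.2.1 ∪ actR p.2.1 q.2.2, p.2.2 * q.2.2)

lemma actL_actL {M N : Type*} [Monoid M] [Monoid N] [DecidableEq M] [DecidableEq N]
    (m m' : M) (X : Finset (M × N)) : actL m (actL m' X) = actL (m * m') X := by
  simp [actL, Finset.image_image, Function.comp_def, mul_assoc]

lemma actL_actR {M N : Type*} [Monoid M] [Monoid N] [DecidableEq M] [DecidableEq N]
    (m : M) (n : N) (X : Finset (M × N)) : actL m (actR X n) = actR (actL m X) n := by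
  simp [actL, actR, Finset.image_image, Function.comp_def]

lemma actL_one {M N : Type*} [Monoid M] [Monoid N] [DecidableEq M] [DecidableEq N]
    (X : Finset (M × N)) : actL (1 : M) X = X := by
  unfold actL
  simp

/-- For a monoid homomorphism `f` from the free monoid `Σ*` to the
Schützenberger product `M ⋄ N`, writing `f(u) = (f_M(u), f_{MN}(u), f_N(u))`,
the middle component of `f(u)` is the union, over all factorizations
`u = v·a·w` with `a` a single letter, of `f_M(v) · f_{MN}(a) · f_N(w)`,
where `m·X·n = {(my, zn) : (y,z) ∈ X}`. -/
theorem schMul_middle_component_formula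
    {α M N : Type*} [Monoid M] [Monoid N] [DecidableEq M] [DecidableEq N]
    (f : List α → M × Finset (M × N) × N)
    (hf1 : f [] = (1, ∅, 1))
    (hfmul : ∀ u v : List α, f (u ++ v) = schMul (f u) (f v)) :
    ∀ (u : List α) (x : M × N),
      x ∈ (f u).2.1 ↔
        ∃ (v : List α) (a : α) (w : List α), u = v ++ a :: w ∧
          x ∈ actR (actL (f v).1 (f [a]).2.1) (f w).2.2 := by
  intro u
  induction u with
  | nil =>
    intro x
    simp only [hf1]
    constructor
    · intro hx; simp at hx
    · rintro ⟨v, a, w, hv, -⟩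
      exact absurd hv (by simp)
  | cons a t ih =>
    intro x
    have h := hfmul [a] t
    simp only [List.singleton_append] at h
    rw [h]
    simp only [schMul, Finset.mem_union]
    constructor
    · rintro (hx | hx)
      · obtain ⟨p, hp, rfl⟩ := Finset.mem_image.mp hx
        obtain ⟨v, b, w, rfl, hp2⟩ := (ih p).mp hp
        refine ⟨a :: v, b, w, rfl, ?_⟩
        have hav : f (a :: v) = schMul (f [a]) (f v) := by
          simpa using hfmul [a] v
        rw [hav]
        show _ ∈ actR (actL ((f [a]).1 * (f v).1) (f [b]).2.1) (f w).2.2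
        rw [← actL_actL, ← actL_actR]
        exact Finset.mem_image_of_mem _ hp2
      · refine ⟨[], a, t, rfl, ?_⟩
        rw [hf1]
        show x ∈ actR (actL (1 : M) (f [a]).2.1) (f t).2.2
        rwa [actL_one]
    · rintro ⟨v, b, w, hv, hx⟩
      cases v with
      | nil =>
        simp only [List.nil_append, List.cons.injEq] at hv
        obtain ⟨rfl, rfl⟩ := hv
        right
        rw [hf1] at hx
        rwa [show ((1 : M), (∅ : Finset (M × N)), (1 : N)).1 = (1 : M) from rfl, actL_one] at hx
      | cons c v' =>
        simp only [List.cons_append, List.cons.injEq] at hv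
        obtain ⟨rfl, rfl⟩ := hv
        left
        have hav : f (a :: v') = schMul (f [a]) (f v') := by
          simpa using hfmul [a] v'
        rw [hav] at hx
        change x ∈ actR (actL ((f [a]).1 * (f v').1) (f [b]).2.1) (f w).2.2 at hx
        rw [← actL_actL, ← actL_actR] at hx
        obtain ⟨p, hp, rfl⟩ := Finset.mem_image.mp hx
        exact Finset.mem_image_of_mem _ ((ih p).mpr ⟨v', b, w, rfl, hp⟩)
end

section
/- Let M, N be monoids such that the Schützenberger product M ⋄ N recognizes, for given regular languages K and L over Σ recognized via monoid homomorphisms g : Σ* → M and h : Σ* → N respectively, the marked product KaL for each a ∈ Σ. Concretely: define f : Σ* → M ⋄ N on letters by f(a) = (g(a), {(1,1)}, h(a)) and f(b) = (g(b), ∅, h(b)) for b ≠ a. Then for P ⊆ M with K = g⁻¹(P) and Q ⊆ N with L = h⁻¹(Q), the language KaL = {vaw : v ∈ K, w ∈ L} equals f⁻¹({(m, X, n) : X ∩ (P × Q) ≠ ∅}). -/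
/-- The Schützenberger product recognizes marked products: if `K = g⁻¹(P)` and
`L = h⁻¹(Q)` are recognized by homomorphisms `g : Σ* → M` and `h : Σ* → N`, and
`f : Σ* → M ⋄ N` is the homomorphism with `f(a) = (g(a), {(1,1)}, h(a))` and
`f(b) = (g(b), ∅, h(b))` for `b ≠ a`, then
`KaL = f⁻¹({(m, X, n) : X ∩ (P × Q) ≠ ∅})`. -/
theorem schuetzenberger_recognizes_marked_product
    {α M N : Type*} [Monoid M] [Monoid N] [DecidableEq M] [DecidableEq N]
    (g : List α → M) (hg1 : g [] = 1) (hgmul : ∀ u v : List α, g (u ++ v) = g u * g v)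
    (h : List α → N) (hh1 : h [] = 1) (hhmul : ∀ u v : List α, h (u ++ v) = h u * h v)
    (P : Set M) (Q : Set N) (a : α)
    (f : List α → M × Finset (M × N) × N)
    (hf1 : f [] = (1, ∅, 1))
    (hfmul : ∀ u v : List α, f (u ++ v) = schMul (f u) (f v))
    (hfa : f [a] = (g [a], ({((1 : M), (1 : N))} : Finset (M × N)), h [a]))
    (hfb : ∀ b : α, b ≠ a → f [b] = (g [b], (∅ : Finset (M × N)), h [b])) :
    {u : List α | ∃ v ∈ g ⁻¹' P, ∃ w ∈ h ⁻¹' Q, u = v ++ a :: w} =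
      f ⁻¹' {t : M × Finset (M × N) × N | ∃ x ∈ t.2.1, x.1 ∈ P ∧ x.2 ∈ Q} := by
  have key : ∀ u : List α, (f u).1 = g u ∧ (f u).2.2 = h u ∧
      ∀ x : M × N, x ∈ (f u).2.1 ↔ ∃ v w, u = v ++ a :: w ∧ x = (g v, h w) := by
    intro u
    induction u with
    | nil =>
      refine ⟨by simp [hf1, hg1], by simp [hf1, hh1], ?_⟩
      intro x
      simp only [hf1, Finset.notMem_empty, false_iff]
      rintro ⟨v, w, hvw, -⟩
      exact List.not_mem_nil (a := a) (hvw ▸ (List.mem_append.2 (Or.inr (List.mem_cons_self (a := a) (l := w)))))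
    | cons b t ih =>
      obtain ⟨ih1, ih2, ih3⟩ := ih
      have hsplit : f (b :: t) = schMul (f [b]) (f t) := hfmul [b] t
      have hgsplit : g (b :: t) = g [b] * g t := hgmul [b] t
      have hhsplit : h (b :: t) = h [b] * h t := hhmul [b] t
      by_cases hb : b = a
      · subst hb
        refine ⟨by rw [hsplit]; simp [schMul, hfa, ih1, hgsplit],
          by rw [hsplit]; simp [schMul, hfa, ih2, hhsplit], ?_⟩
        intro x
        rw [hsplit]
        simp only [schMul, hfa, actL, actR, Finset.mem_union, Finset.mem_image,
          Finset.mem_singleton]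
        constructor
        · rintro (⟨p, hp, rfl⟩ | ⟨p, rfl, rfl⟩)
          · obtain ⟨v, w, rfl, rfl⟩ := (ih3 p).1 hp
            exact ⟨b :: v, w, rfl, by rw [show b :: v = [b] ++ v from rfl, hgmul]⟩
          · exact ⟨[], t, rfl, by simp [hg1, ih2, one_mul]⟩
        · rintro ⟨v, w, hvw, rfl⟩
          cases v with
          | nil =>
            simp only [List.nil_append, List.cons.injEq] at hvw
            obtain ⟨-, rfl⟩ := hvw
            exact Or.inr ⟨(1, 1), rfl, by simp [hg1, ih2]⟩
          | cons c v' =>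
            simp only [List.cons_append, List.cons.injEq] at hvw
            obtain ⟨rfl, rfl⟩ := hvw
            refine Or.inl ⟨(g v', h w), (ih3 _).2 ⟨v', w, rfl, rfl⟩, ?_⟩
            rw [show b :: v' = [b] ++ v' from rfl, hgmul]
      · refine ⟨by rw [hsplit]; simp [schMul, hfb b hb, ih1, hgsplit],
          by rw [hsplit]; simp [schMul, hfb b hb, ih2, hhsplit], ?_⟩
        intro x
        rw [hsplit]
        simp only [schMul, hfb b hb, actL, actR, Finset.mem_union, Finset.mem_image,
          Finset.notMem_empty, false_and, exists_false, or_false]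
        constructor
        · rintro ⟨p, hp, rfl⟩
          obtain ⟨v, w, rfl, rfl⟩ := (ih3 p).1 hp
          exact ⟨b :: v, w, rfl, by rw [show b :: v = [b] ++ v from rfl, hgmul]⟩
        · rintro ⟨v, w, hvw, rfl⟩
          cases v with
          | nil =>
            simp only [List.nil_append, List.cons.injEq] at hvw
            exact absurd hvw.1 hb
          | cons c v' =>
            simp only [List.cons_append, List.cons.injEq] at hvw
            obtain ⟨rfl, rfl⟩ := hvw
            refine ⟨(g v', h w), (ih3 _).2 ⟨v', w, rfl, rfl⟩, ?_⟩
            rw [show b :: v' = [b] ++ v' from rfl, hgmul]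
  ext u
  obtain ⟨-, -, h3⟩ := key u
  simp only [Set.mem_setOf_eq, Set.mem_preimage]
  constructor
  · rintro ⟨v, hv, w, hw, rfl⟩
    exact ⟨(g v, h w), (h3 _).2 ⟨v, w, rfl, rfl⟩, hv, hw⟩
  · rintro ⟨x, hx, hP, hQ⟩
    obtain ⟨v, w, rfl, rfl⟩ := (h3 x).1 hx
    exact ⟨v, hP, w, hQ, rfl⟩
end
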